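/- Every track in the boundary tetrahedron T is a simple closed curve: if P is a nonempty connected pattern in T, then P (with the subspace topology from ℝ³) is homeomorphic to the circle S¹ (the unit sphere in EuclideanSpace ℝ (Fin 2)). -/

import Mathlib

open Set

noncomputable section

/-- Abbreviation for Euclidean 3-space. -/
abbrev E3 := EuclideanSpace ℝ (Fin 3)

/-- The closed 2-dimensional face of the tetrahedron opposite the vertex `v i`:
the convex hull of the other three vertices. -/
def TetFace (v : Fin 4 → E3) (i : Fin 4) : Set E3 :=
  convexHull ℝ (v '' {j | j ≠ i})

/-- The boundary tetrahedron `T`: the union of the four closed 2-dimensional faces. -/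
def Tet (v : Fin 4 → E3) : Set E3 := ⋃ i, TetFace v i

/-- The union of the (closed) edges of the tetrahedron. -/
def TetEdges (v : Fin 4 → E3) : Set E3 :=
  ⋃ (i : Fin 4) (j : Fin 4) (_ : i ≠ j), segment ℝ (v i) (v j)

/-- The pair of endpoints `p = (p.1, p.2)` of a straight line segment inside the face opposite
vertex `i` joins two *distinct* edges of that face: `p.1` lies in the relative interior
(open segment) of one edge of the face and `p.2` in the relative interior of a different edge. -/
def JoinsDistinctEdges (v : Fin 4 → E3) (i : Fin 4) (p : E3 × E3) : Prop :=
  ∃ j k l m : Fin 4, j ≠ i ∧ k ≠ i ∧ l ≠ i ∧ m ≠ i ∧ j ≠ k ∧ l ≠ m ∧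
    ({j, k} : Finset (Fin 4)) ≠ ({l, m} : Finset (Fin 4)) ∧
    p.1 ∈ openSegment ℝ (v j) (v k) ∧ p.2 ∈ openSegment ℝ (v l) (v m)

/-- A pattern in the boundary tetrahedron `T` determined by the vertices `v`. -/
def IsPattern (v : Fin 4 → E3) (P : Set E3) : Prop :=
  P ⊆ Tet v ∧
  -- (i) on each face the pattern is a finite disjoint union of closed straight segments,
  -- each joining the relative interiors of two distinct edges of that face
  (∀ i : Fin 4, ∃ L : Finset (E3 × E3),
    (P ∩ TetFace v i = ⋃ p ∈ L, segment ℝ p.1 p.2) ∧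
    (∀ p ∈ L, JoinsDistinctEdges v i p) ∧
    (∀ p ∈ L, ∀ q ∈ L, p ≠ q → Disjoint (segment ℝ p.1 p.2) (segment ℝ q.1 q.2))) ∧
  -- (ii) the intersection with each edge is a finite subset of its relative interior
  (∀ i j : Fin 4, i ≠ j →
    (P ∩ segment ℝ (v i) (v j)).Finite ∧
    P ∩ segment ℝ (v i) (v j) ⊆ openSegment ℝ (v i) (v j))

/-- A track is a nonempty connected pattern. -/
def IsTrack (v : Fin 4 → E3) (P : Set E3) : Prop :=
  IsPattern v P ∧ P.Nonempty ∧ IsPreconnected P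

/-- The weight of a track: the number of points of intersection with the edges of `T`. -/
def trackWeight (v : Fin 4 → E3) (P : Set E3) : ℕ :=
  (P ∩ TetEdges v).ncard


namespace TrackAux

local instance : DecidableEq E3 := Classical.decEq _

variable {v : Fin 4 → E3}

/-- linear combination of the vertices -/
def combo (v : Fin 4 → E3) (w : Fin 4 → ℝ) : E3 := ∑ j, w j • v j

theorem combo_unique (hv : AffineIndependent ℝ v) {w1 w2 : Fin 4 → ℝ}
    (h1 : ∑ j, w1 j = 1) (h2 : ∑ j, w2 j = 1) (h : combo v w1 = combo v w2) : w1 = w2 := by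
  have e1 := Finset.univ.affineCombination_eq_linear_combination v w1 h1
  have e2 := Finset.univ.affineCombination_eq_linear_combination v w2 h2
  exact (affineIndependent_iff_eq_of_fintype_affineCombination_eq ℝ v).mp hv w1 w2 h1 h2
    (by rw [e1, e2]; exact h)

def pairW (j k : Fin 4) (a b : ℝ) : Fin 4 → ℝ :=
  fun l => (if l = j then a else 0) + (if l = k then b else 0)

theorem sum_pairW (j k : Fin 4) (a b : ℝ) : ∑ l, pairW j k a b l = a + b := by
  simp [pairW, Finset.sum_add_distrib]

theorem combo_pairW (j k : Fin 4) (a b : ℝ) :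
    combo v (pairW j k a b) = a • v j + b • v k := by
  simp [combo, pairW, add_smul, ite_smul, Finset.sum_add_distrib]

theorem openSegment_weights {j k : Fin 4} (hjk : j ≠ k) {x : E3}
    (hx : x ∈ openSegment ℝ (v j) (v k)) :
    ∃ w : Fin 4 → ℝ, (∀ l, 0 ≤ w l) ∧ ∑ l, w l = 1 ∧ 0 < w j ∧ 0 < w k ∧
      (∀ l, l ≠ j → l ≠ k → w l = 0) ∧ x = combo v w := by
  obtain ⟨a, b, ha, hb, hab, hx⟩ := hx
  refine ⟨pairW j k a b, ?_, ?_, ?_, ?_, ?_, ?_⟩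
  · intro l; unfold pairW; positivity
  · rw [sum_pairW]; exact hab
  · simp [pairW, hjk, ha]
  · simp [pairW, hjk.symm, hb]
  · intro l h1 h2; simp [pairW, h1, h2]
  · rw [combo_pairW, hx]

theorem segment_weights {j k : Fin 4} {x : E3}
    (hx : x ∈ segment ℝ (v j) (v k)) :
    ∃ w : Fin 4 → ℝ, (∀ l, 0 ≤ w l) ∧ ∑ l, w l = 1 ∧
      (∀ l, l ≠ j → l ≠ k → w l = 0) ∧ x = combo v w := by
  obtain ⟨a, b, ha, hb, hab, hx⟩ := hx
  refine ⟨pairW j k a b, ?_, ?_, ?_, ?_⟩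
  · intro l; unfold pairW; positivity
  · rw [sum_pairW]; exact hab
  · intro l h1 h2; simp [pairW, h1, h2]
  · rw [combo_pairW, hx]

theorem face_coe (v : Fin 4 → E3) (i : Fin 4) :
    TetFace v i = convexHull ℝ (↑(({i}ᶜ : Finset (Fin 4)).image v) : Set E3) := by
  unfold TetFace
  congr 1
  ext x
  simp [eq_comm]

theorem face_weights (hv : AffineIndependent ℝ v) {i : Fin 4} {x : E3}
    (hx : x ∈ TetFace v i) :
    ∃ w : Fin 4 → ℝ, (∀ l, 0 ≤ w l) ∧ ∑ l, w l = 1 ∧ w i = 0 ∧ x = combo v w := by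
  rw [face_coe, Finset.convexHull_eq] at hx
  obtain ⟨w, hw0, hw1, hwx⟩ := hx
  have hinj : ∀ a ∈ ({i}ᶜ : Finset (Fin 4)), ∀ b ∈ ({i}ᶜ : Finset (Fin 4)), v a = v b → a = b :=
    fun a _ b _ h => hv.injective h
  rw [Finset.sum_image hinj] at hw1
  rw [Finset.centerMass_eq_of_sum_1 _ _ (by rw [Finset.sum_image hinj]; exact hw1)] at hwx
  rw [Finset.sum_image hinj] at hwx
  refine ⟨fun l => if l = i then 0 else w (v l), ?_, ?_, by simp, ?_⟩
  · intro l
    by_cases h : l = i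
    · simp [h]
    · simp only [h, if_false]
      exact hw0 _ (Finset.mem_image_of_mem v (by simp [h]))
  · rw [Fintype.sum_eq_add_sum_compl i]
    have key : ∀ l ∈ ({i}ᶜ : Finset (Fin 4)), (if l = i then (0:ℝ) else w (v l)) = w (v l) := by
      intro l hl
      simp only [Finset.mem_compl, Finset.mem_singleton] at hl
      simp [hl]
    rw [Finset.sum_congr rfl key, hw1]
    simp
  · rw [← hwx]
    unfold combo
    rw [Fintype.sum_eq_add_sum_compl i]
    have key : ∀ l ∈ ({i}ᶜ : Finset (Fin 4)),
        (if l = i then (0:ℝ) else w (v l)) • v l = w (v l) • id (v l) := by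
      intro l hl
      simp only [Finset.mem_compl, Finset.mem_singleton] at hl
      simp [hl]
    rw [Finset.sum_congr rfl key]
    simp

theorem vertex_mem_face {j i : Fin 4} (h : j ≠ i) : v j ∈ TetFace v i :=
  subset_convexHull ℝ _ ⟨j, h, rfl⟩

theorem segment_subset_face {j k i : Fin 4} (hj : j ≠ i) (hk : k ≠ i) :
    segment ℝ (v j) (v k) ⊆ TetFace v i :=
  (convex_convexHull ℝ _).segment_subset (vertex_mem_face hj) (vertex_mem_face hk)

set_option maxRecDepth 10000 in
theorem pair_compl_union : ∀ i j k l m : Fin 4,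
    (j ≠ k ∧ l ≠ m ∧ j ≠ i ∧ k ≠ i ∧ l ≠ i ∧ m ≠ i ∧ ({j,k} : Finset (Fin 4)) ≠ {l,m}) →
    ({j,k} ∪ {l,m} : Finset (Fin 4)) = {i}ᶜ := by decide

theorem exists_fourth : ∀ i a b : Fin 4, ∃ n, n ≠ i ∧ n ≠ a ∧ n ≠ b := by decide

theorem edge_unique (hv : AffineIndependent ℝ v) {j k l m : Fin 4} (hjk : j ≠ k) (hlm : l ≠ m)
    {x : E3} (h1 : x ∈ openSegment ℝ (v j) (v k)) (h2 : x ∈ segment ℝ (v l) (v m)) :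
    ({j, k} : Finset (Fin 4)) = {l, m} := by
  obtain ⟨w1, _, hs1, hj, hk, hsupp1, hx1⟩ := openSegment_weights hjk h1
  obtain ⟨w2, _, hs2, hsupp2, hx2⟩ := segment_weights h2
  have hw : w1 = w2 := combo_unique hv hs1 hs2 (hx1 ▸ hx2 ▸ rfl)
  have hsub : ({j, k} : Finset (Fin 4)) ⊆ {l, m} := by
    intro n hn
    by_contra hnm
    simp only [Finset.mem_insert, Finset.mem_singleton, not_or] at hn hnm
    have h0 : w2 n = 0 := hsupp2 n hnm.1 hnm.2
    rcases hn with rfl | rfl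
    · rw [hw, h0] at hj; exact lt_irrefl _ hj
    · rw [hw, h0] at hk; exact lt_irrefl _ hk
  exact Finset.eq_of_subset_of_card_le hsub
    (by rw [Finset.card_pair hlm, Finset.card_pair hjk])

/-- weights for a point strictly inside a segment joining two distinct open edges of face `i` -/
theorem interior_weights (hv : AffineIndependent ℝ v) {i j k l m : Fin 4}
    (hji : j ≠ i) (hki : k ≠ i) (hli : l ≠ i) (hmi : m ≠ i) (hjk : j ≠ k) (hlm : l ≠ m)
    (hne : ({j,k} : Finset (Fin 4)) ≠ {l,m}) {p1 p2 x : E3}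
    (hp1 : p1 ∈ openSegment ℝ (v j) (v k)) (hp2 : p2 ∈ openSegment ℝ (v l) (v m))
    (hx : x ∈ openSegment ℝ p1 p2) :
    ∃ w : Fin 4 → ℝ, (∀ n, 0 ≤ w n) ∧ ∑ n, w n = 1 ∧ (∀ n, n ≠ i → 0 < w n) ∧ w i = 0 ∧
      x = combo v w := by
  obtain ⟨w1, hw1n, hs1, hw1j, hw1k, hsupp1, hxe1⟩ := openSegment_weights hjk hp1
  obtain ⟨w2, hw2n, hs2, hw2l, hw2m, hsupp2, hxe2⟩ := openSegment_weights hlm hp2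
  obtain ⟨a, b, ha, hb, hab, hxy⟩ := hx
  refine ⟨fun n => a * w1 n + b * w2 n, ?_, ?_, ?_, ?_, ?_⟩
  · intro n; have := hw1n n; have := hw2n n; positivity
  · rw [Finset.sum_add_distrib, ← Finset.mul_sum, ← Finset.mul_sum, hs1, hs2,
      mul_one, mul_one]; exact hab
  · intro n hni
    have hmem : n ∈ ({j,k} ∪ {l,m} : Finset (Fin 4)) := by
      rw [pair_compl_union i j k l m ⟨hjk, hlm, hji, hki, hli, hmi, hne⟩]
      simpa using hni
    rw [Finset.mem_union] at hmem
    rcases hmem with hn | hn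
    · have hpos : 0 < w1 n := by
        rcases Finset.mem_insert.mp hn with rfl | hn
        · exact hw1j
        · rw [Finset.mem_singleton] at hn; subst hn; exact hw1k
      exact add_pos_of_pos_of_nonneg (mul_pos ha hpos) (mul_nonneg hb.le (hw2n n))
    · have hpos : 0 < w2 n := by
        rcases Finset.mem_insert.mp hn with rfl | hn
        · exact hw2l
        · rw [Finset.mem_singleton] at hn; subst hn; exact hw2m
      exact add_pos_of_nonneg_of_pos (mul_nonneg ha.le (hw1n n)) (mul_pos hb hpos)
  · show a * w1 i + b * w2 i = 0
    rw [hsupp1 i (Ne.symm hji) (Ne.symm hki), hsupp2 i (Ne.symm hli) (Ne.symm hmi)]; ring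
  · rw [← hxy, hxe1, hxe2]
    unfold combo
    rw [Finset.smul_sum, Finset.smul_sum, ← Finset.sum_add_distrib]
    apply Finset.sum_congr rfl
    intro n _
    rw [add_smul, mul_smul, mul_smul]

theorem interior_avoids_edge (hv : AffineIndependent ℝ v) {i j k l m : Fin 4}
    (hji : j ≠ i) (hki : k ≠ i) (hli : l ≠ i) (hmi : m ≠ i) (hjk : j ≠ k) (hlm : l ≠ m)
    (hne : ({j,k} : Finset (Fin 4)) ≠ {l,m}) {p1 p2 x : E3}
    (hp1 : p1 ∈ openSegment ℝ (v j) (v k)) (hp2 : p2 ∈ openSegment ℝ (v l) (v m))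
    (hx : x ∈ openSegment ℝ p1 p2) {a b : Fin 4} (hab : a ≠ b) :
    x ∉ segment ℝ (v a) (v b) := by
  intro hseg
  obtain ⟨w, _, hs, hpos, _, hxw⟩ :=
    interior_weights hv hji hki hli hmi hjk hlm hne hp1 hp2 hx
  obtain ⟨w', _, hs', hsupp', hxw'⟩ := segment_weights hseg
  have hw : w = w' := combo_unique hv hs hs' (hxw ▸ hxw' ▸ rfl)
  obtain ⟨n, hni, hna, hnb⟩ := exists_fourth i a b
  have := hpos n hni
  rw [hw, hsupp' n hna hnb] at this
  exact lt_irrefl _ this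

theorem interior_avoids_face (hv : AffineIndependent ℝ v) {i j k l m : Fin 4}
    (hji : j ≠ i) (hki : k ≠ i) (hli : l ≠ i) (hmi : m ≠ i) (hjk : j ≠ k) (hlm : l ≠ m)
    (hne : ({j,k} : Finset (Fin 4)) ≠ {l,m}) {p1 p2 x : E3}
    (hp1 : p1 ∈ openSegment ℝ (v j) (v k)) (hp2 : p2 ∈ openSegment ℝ (v l) (v m))
    (hx : x ∈ openSegment ℝ p1 p2) {i' : Fin 4} (hi' : i' ≠ i) :
    x ∉ TetFace v i' := by
  intro hface
  obtain ⟨w, _, hs, hpos, _, hxw⟩ :=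
    interior_weights hv hji hki hli hmi hjk hlm hne hp1 hp2 hx
  obtain ⟨w', _, hs', hzero', hxw'⟩ := face_weights hv hface
  have hw : w = w' := combo_unique hv hs hs' (hxw ▸ hxw' ▸ rfl)
  have := hpos i' hi'
  rw [hw, hzero'] at this
  exact lt_irrefl _ this

theorem endpoint_not_in_face (hv : AffineIndependent ℝ v) {j k : Fin 4} (hjk : j ≠ k) {z : E3}
    (hz : z ∈ openSegment ℝ (v j) (v k)) {i : Fin 4} (hi : i = j ∨ i = k) :
    z ∉ TetFace v i := by
  intro hface
  obtain ⟨w, _, hs, hwj, hwk, _, hxw⟩ := openSegment_weights hjk hz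
  obtain ⟨w', _, hs', hzero', hxw'⟩ := face_weights hv hface
  have hw : w = w' := combo_unique hv hs hs' (hxw ▸ hxw' ▸ rfl)
  rcases hi with rfl | rfl
  · rw [hw, hzero'] at hwj; exact lt_irrefl _ hwj
  · rw [hw, hzero'] at hwk; exact lt_irrefl _ hwk

theorem endpoint_in_face {j k i : Fin 4} (hj : j ≠ i) (hk : k ≠ i) {z : E3}
    (hz : z ∈ openSegment ℝ (v j) (v k)) : z ∈ TetFace v i :=
  segment_subset_face hj hk (openSegment_subset_segment ℝ _ _ hz)

/-! ### The combinatorial structure of a pattern -/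

/-- All the data of a pattern, destructured. -/
structure Setup where
  v : Fin 4 → E3
  hv : AffineIndependent ℝ v
  P : Set E3
  L : Fin 4 → Finset (E3 × E3)
  hface : ∀ i, P ∩ TetFace v i = ⋃ p ∈ L i, segment ℝ p.1 p.2
  hjoin : ∀ i, ∀ p ∈ L i, JoinsDistinctEdges v i p
  hdisj : ∀ i, ∀ p ∈ L i, ∀ q ∈ L i, p ≠ q →
    Disjoint (segment ℝ p.1 p.2) (segment ℝ q.1 q.2)
  hsub : P ⊆ Tet v

/-- The segments ("objects") of the pattern, tagged by their face. -/
def Obj (S : Setup) := Σ i : Fin 4, {p : E3 × E3 // p ∈ S.L i}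

instance (S : Setup) : DecidableEq (Obj S) := Classical.decEq _
instance (S : Setup) : Fintype (Obj S) := by unfold Obj; infer_instance

variable {S : Setup}

def epA (o : Obj S) : E3 := o.2.1.1
def epB (o : Obj S) : E3 := o.2.1.2
def ep (o : Obj S) (b : Bool) : E3 := bif b then epB o else epA o
def seg (o : Obj S) : Set E3 := segment ℝ (epA o) (epB o)
def opn (o : Obj S) : Set E3 := openSegment ℝ (epA o) (epB o)
def IsEnd (z : E3) (o : Obj S) : Prop := z = epA o ∨ z = epB o

theorem isEnd_ep (o : Obj S) (b : Bool) : IsEnd (ep o b) o := by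
  cases b
  · exact Or.inl rfl
  · exact Or.inr rfl

theorem joins (o : Obj S) : JoinsDistinctEdges S.v o.1 o.2.1 :=
  S.hjoin o.1 o.2.1 o.2.2

theorem seg_subset (o : Obj S) : seg o ⊆ S.P ∩ TetFace S.v o.1 := by
  rw [S.hface o.1]
  exact Set.subset_biUnion_of_mem (u := fun p => segment ℝ p.1 p.2) o.2.2

theorem seg_subset_P (o : Obj S) : seg o ⊆ S.P :=
  fun x hx => (seg_subset o hx).1

theorem seg_subset_face (o : Obj S) : seg o ⊆ TetFace S.v o.1 :=
  fun x hx => (seg_subset o hx).2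

theorem epA_mem (o : Obj S) : epA o ∈ seg o := left_mem_segment ℝ _ _
theorem epB_mem (o : Obj S) : epB o ∈ seg o := right_mem_segment ℝ _ _

theorem mem_seg_of_isEnd {z : E3} {o : Obj S} (h : IsEnd z o) : z ∈ seg o := by
  rcases h with rfl | rfl
  exacts [epA_mem o, epB_mem o]

theorem epA_ne_epB (o : Obj S) : epA o ≠ epB o := by
  obtain ⟨j, k, l, m, hji, hki, hli, hmi, hjk, hlm, hne, h1, h2⟩ := joins o
  intro h
  apply hne
  apply edge_unique S.hv hjk hlm h1
  apply openSegment_subset_segment ℝ _ _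
  show epA o ∈ _
  rw [h]
  exact h2

theorem ep_not (o : Obj S) (b : Bool) : ep o (!b) ≠ ep o b := by
  cases b
  · exact (epA_ne_epB o).symm
  · exact epA_ne_epB o

theorem seg_eq_ep (o : Obj S) (b : Bool) : seg o = segment ℝ (ep o (!b)) (ep o b) := by
  cases b
  · exact segment_symm ℝ _ _
  · rfl

/-- A point strictly inside a segment of the pattern is on no closed edge of `T`. -/
theorem opn_avoids_edge {o : Obj S} {x : E3} (hx : x ∈ opn o) {a b : Fin 4} (hab : a ≠ b) :
    x ∉ segment ℝ (S.v a) (S.v b) := by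
  obtain ⟨j, k, l, m, hji, hki, hli, hmi, hjk, hlm, hne, h1, h2⟩ := joins o
  exact interior_avoids_edge S.hv hji hki hli hmi hjk hlm hne h1 h2 hx hab

/-- A point strictly inside a segment of the pattern is on no other face. -/
theorem opn_avoids_face {o : Obj S} {x : E3} (hx : x ∈ opn o) {i' : Fin 4} (hi' : i' ≠ o.1) :
    x ∉ TetFace S.v i' := by
  obtain ⟨j, k, l, m, hji, hki, hli, hmi, hjk, hlm, hne, h1, h2⟩ := joins o
  exact interior_avoids_face S.hv hji hki hli hmi hjk hlm hne h1 h2 hx hi'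

theorem mem_seg_cases {o : Obj S} {x : E3} (hx : x ∈ seg o) : x ∈ opn o ∨ IsEnd x o := by
  rw [seg, ← insert_endpoints_openSegment] at hx
  rcases hx with rfl | rfl | h
  · exact Or.inr (Or.inl rfl)
  · exact Or.inr (Or.inr rfl)
  · exact Or.inl h

/-- Two distinct objects in the same face have disjoint segments. -/
theorem same_face_eq {o o' : Obj S} (hf : o.1 = o'.1) {x : E3}
    (h : x ∈ seg o) (h' : x ∈ seg o') : o = o' := by
  by_contra hne
  rcases o with ⟨i, p, hp⟩
  rcases o' with ⟨i', q, hq⟩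
  cases hf
  have hpq : p ≠ q := by
    intro h; apply hne; cases h; rfl
  exact Set.disjoint_left.mp (S.hdisj i p hp q hq hpq) h h'

/-- Each endpoint lies in the relative interior of a unique edge. -/
theorem end_on_edge {z : E3} {o : Obj S} (h : IsEnd z o) :
    ∃ a b : Fin 4, a ≠ b ∧ a ≠ o.1 ∧ b ≠ o.1 ∧ z ∈ openSegment ℝ (S.v a) (S.v b) := by
  obtain ⟨j, k, l, m, hji, hki, hli, hmi, hjk, hlm, hne, h1, h2⟩ := joins o
  rcases h with rfl | rfl
  · exact ⟨j, k, hjk, hji, hki, h1⟩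
  · exact ⟨l, m, hlm, hli, hmi, h2⟩

/-- A common point of two distinct objects is an endpoint of both. -/
theorem shared_isEnd {o o' : Obj S} (hne : o ≠ o') {x : E3}
    (h : x ∈ seg o) (h' : x ∈ seg o') : IsEnd x o ∧ IsEnd x o' := by
  have hf : o.1 ≠ o'.1 := by
    intro hf
    exact hne (same_face_eq hf h h')
  constructor
  · rcases mem_seg_cases h with ho | ho
    · exact absurd (seg_subset_face o' h') (opn_avoids_face ho hf.symm)
    · exact ho
  · rcases mem_seg_cases h' with ho | ho
    · exact absurd (seg_subset_face o h) (opn_avoids_face ho hf)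
    · exact ho

set_option synthInstance.maxSize 1000 in
set_option synthInstance.maxHeartbeats 200000 in
theorem fourth_vertex : ∀ j k i₀ : Fin 4, j ≠ k → i₀ ≠ j → i₀ ≠ k →
    ∃ i₁, i₁ ≠ i₀ ∧ i₁ ≠ j ∧ i₁ ≠ k ∧ ∀ n : Fin 4, n = i₀ ∨ n = i₁ ∨ n = j ∨ n = k := by
  decide

/-- Every endpoint of an object is the endpoint of exactly one other object. -/
theorem endpoint_partner {z : E3} {o : Obj S} (h : IsEnd z o) :
    ∃! o' : Obj S, o' ≠ o ∧ IsEnd z o' := by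
  obtain ⟨a, b, hab, hai, hbi, hz⟩ := end_on_edge h
  obtain ⟨i₁, hi₁0, hi₁a, hi₁b, hall⟩ := fourth_vertex a b o.1 hab (Ne.symm hai) (Ne.symm hbi)
  have hzP : z ∈ S.P := seg_subset_P o (mem_seg_of_isEnd h)
  have hzf : z ∈ TetFace S.v i₁ := endpoint_in_face (Ne.symm hi₁a) (Ne.symm hi₁b) hz
  have hzm : z ∈ ⋃ p ∈ S.L i₁, segment ℝ p.1 p.2 := by
    rw [← S.hface i₁]; exact ⟨hzP, hzf⟩
  rw [Set.mem_iUnion₂] at hzm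
  obtain ⟨q, hq, hzq⟩ := hzm
  set o' : Obj S := ⟨i₁, q, hq⟩ with ho'def
  have ho'1 : o'.1 = i₁ := rfl
  have ho'ne : o' ≠ o := by
    intro hh
    exact hi₁0 (by rw [← hh])
  have hzo' : z ∈ seg o' := hzq
  have hend : IsEnd z o' := by
    rcases mem_seg_cases hzo' with hop | he
    · exact absurd (openSegment_subset_segment ℝ _ _ hz) (opn_avoids_edge hop hab)
    · exact he
  refine ⟨o', ⟨ho'ne, hend⟩, ?_⟩
  rintro o'' ⟨ho''ne, hend''⟩
  -- o''.1 is not a, not b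
  have h1 : o''.1 ≠ a := by
    rintro rfl
    exact endpoint_not_in_face S.hv hab hz (Or.inl rfl) (seg_subset_face o'' (mem_seg_of_isEnd hend''))
  have h2 : o''.1 ≠ b := by
    rintro rfl
    exact endpoint_not_in_face S.hv hab hz (Or.inr rfl) (seg_subset_face o'' (mem_seg_of_isEnd hend''))
  rcases hall o''.1 with h0 | h0 | h0 | h0
  · -- same face as o : contradiction with o'' ≠ o
    exact absurd (same_face_eq h0 (mem_seg_of_isEnd hend'') (mem_seg_of_isEnd h)) ho''ne
  · -- same face as o'
    exact same_face_eq (h0.trans ho'1.symm) (mem_seg_of_isEnd hend'') (mem_seg_of_isEnd hend)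
  · exact absurd h0 h1
  · exact absurd h0 h2


/-! ### The successor dynamics -/

/-- The other object sharing the endpoint `ep o b`. -/
def partner (o : Obj S) (b : Bool) : Obj S :=
  (endpoint_partner (isEnd_ep o b)).choose

theorem partner_ne (o : Obj S) (b : Bool) : partner o b ≠ o :=
  (endpoint_partner (isEnd_ep o b)).choose_spec.1.1

theorem isEnd_partner (o : Obj S) (b : Bool) : IsEnd (ep o b) (partner o b) :=
  (endpoint_partner (isEnd_ep o b)).choose_spec.1.2

theorem partner_uniq {o : Obj S} {b : Bool} {o' : Obj S} (h1 : o' ≠ o)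
    (h2 : IsEnd (ep o b) o') : o' = partner o b :=
  (endpoint_partner (isEnd_ep o b)).choose_spec.2 o' ⟨h1, h2⟩

/-- The slot (`false` = first endpoint, `true` = second) at which `z` sits in `o`. -/
def slotOf (o : Obj S) (z : E3) : Bool := if z = epA o then false else true

theorem ep_slotOf {o : Obj S} {z : E3} (h : IsEnd z o) : ep o (slotOf o z) = z := by
  rcases h with rfl | rfl
  · simp [slotOf, ep]
  · simp [slotOf, ep, (epA_ne_epB o).symm]

theorem slotOf_ep {o : Obj S} {b : Bool} {z : E3} (h : ep o b = z) : slotOf o z = b := by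
  subst h
  cases b
  · simp [slotOf, ep]
  · simp [slotOf, ep, (epA_ne_epB o).symm]

/-- One step of the walk: cross to the partner object at the forward endpoint. -/
def nxt (x : Obj S × Bool) : Obj S × Bool :=
  (partner x.1 x.2, !(slotOf (partner x.1 x.2) (ep x.1 x.2)))

/-- Orientation reversal. -/
def rev (x : Obj S × Bool) : Obj S × Bool := (x.1, !x.2)

theorem rev_rev (x : Obj S × Bool) : rev (rev x) = x := by
  simp [rev]

theorem nxt_fst_ne (x : Obj S × Bool) : (nxt x).1 ≠ x.1 := partner_ne x.1 x.2

theorem ep_nxt_back (x : Obj S × Bool) : ep (nxt x).1 (!(nxt x).2) = ep x.1 x.2 := by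
  show ep (partner x.1 x.2) (! !(slotOf (partner x.1 x.2) (ep x.1 x.2))) = _
  rw [Bool.not_not]
  exact ep_slotOf (isEnd_partner x.1 x.2)

theorem nxt_rev_nxt (x : Obj S × Bool) : nxt (rev (nxt x)) = rev x := by
  have hb : ep (nxt x).1 (!(nxt x).2) = ep x.1 x.2 := ep_nxt_back x
  show (partner (nxt x).1 (!(nxt x).2),
    !(slotOf (partner (nxt x).1 (!(nxt x).2)) (ep (nxt x).1 (!(nxt x).2)))) = (x.1, !x.2)
  have hp : partner (nxt x).1 (!(nxt x).2) = x.1 := by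
    symm
    apply partner_uniq
    · exact (nxt_fst_ne x).symm
    · rw [hb]; exact isEnd_ep x.1 x.2
  rw [hp, hb, slotOf_ep rfl]

/-- The walk as a permutation of the (finitely many) oriented objects. -/
def nxtPerm (S : Setup) : Equiv.Perm (Obj S × Bool) where
  toFun := nxt
  invFun := rev ∘ nxt ∘ rev
  left_inv := by
    intro x
    show rev (nxt (rev (nxt x))) = x
    rw [nxt_rev_nxt, rev_rev]
  right_inv := by
    intro x
    show nxt (rev (nxt (rev x))) = x
    have h := nxt_rev_nxt (rev x)
    rw [rev_rev x] at h
    exact h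

theorem nxtPerm_apply (x : Obj S × Bool) : nxtPerm S x = nxt x := rfl

/-! ### The orbit of an oriented object -/

section Orbit

variable (x₀ : Obj S × Bool)

/-- Position of the walk after `n` (possibly negative) steps. -/
def tau (n : ℤ) : Obj S × Bool := ((nxtPerm S) ^ n) x₀

/-- Period of the walk. -/
def per : ℕ := Function.minimalPeriod nxt x₀

theorem tau_zero : tau x₀ 0 = x₀ := rfl

theorem tau_add_one (n : ℤ) : tau x₀ (n + 1) = nxt (tau x₀ n) := by
  unfold tau
  rw [add_comm, zpow_add, Equiv.Perm.mul_apply, zpow_one]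
  rfl

theorem tau_sub_one (n : ℤ) : tau x₀ (n - 1) = (nxtPerm S)⁻¹ (tau x₀ n) := by
  unfold tau
  rw [sub_eq_add_neg, add_comm, zpow_add, Equiv.Perm.mul_apply]
  simp

theorem nxt_tau_sub_one (n : ℤ) : nxt (tau x₀ (n - 1)) = tau x₀ n := by
  rw [← tau_add_one]
  norm_num

theorem per_pos : 0 < per x₀ := by
  apply Function.minimalPeriod_pos_of_mem_periodicPts
  rw [Function.mem_periodicPts]
  refine ⟨orderOf (nxtPerm S), orderOf_pos _, ?_⟩
  show nxt^[orderOf (nxtPerm S)] x₀ = x₀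
  have h1 : (nxt : Obj S × Bool → Obj S × Bool) = ⇑(nxtPerm S) := rfl
  rw [h1, ← Equiv.Perm.coe_pow, pow_orderOf_eq_one]
  rfl

theorem perm_fix_zpow {α : Type*} (e : Equiv.Perm α) {x : α} (h : e x = x) (q : ℤ) :
    (e ^ q) x = x := by
  induction q using Int.induction_on with
  | zero => rfl
  | succ n ih => rw [zpow_add, zpow_one, Equiv.Perm.mul_apply, h]; exact ih
  | pred n ih =>
    rw [sub_eq_add_neg, zpow_add, Equiv.Perm.mul_apply]
    have : e⁻¹ x = x := by
      apply e.injective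
      exact (e.apply_symm_apply x).trans h.symm
    simpa [this] using ih

theorem tau_eq_self_iff (n : ℤ) : tau x₀ n = x₀ ↔ (per x₀ : ℤ) ∣ n := by
  constructor
  · intro h
    set m := per x₀ with hm
    have hmpos := per_pos x₀
    have hmz : (0:ℤ) < (m:ℤ) := by exact_mod_cast hmpos
    set q := n / (m:ℤ)
    set r := n % (m:ℤ)
    have hrn : n = (m:ℤ) * q + r := (Int.mul_ediv_add_emod n (m:ℤ)).symm
    have hr0 : 0 ≤ r := Int.emod_nonneg n (by omega)
    have hrm : r < (m:ℤ) := Int.emod_lt_of_pos n hmz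
    have hfixm : ((nxtPerm S) ^ (m:ℤ)) x₀ = x₀ := by
      rw [zpow_natCast]
      have : (⇑((nxtPerm S) ^ m)) x₀ = nxt^[m] x₀ := by rw [Equiv.Perm.coe_pow]; rfl
      rw [this]
      exact Function.isPeriodicPt_minimalPeriod nxt x₀
    have hfixmq : ((nxtPerm S) ^ ((m:ℤ) * q)) x₀ = x₀ := by
      rw [zpow_mul]
      exact perm_fix_zpow _ hfixm q
    have h2 : ((nxtPerm S) ^ n) x₀ = x₀ := h
    have hfixr : ((nxtPerm S) ^ r) x₀ = x₀ := by
      have h3 : ((nxtPerm S) ^ r) (((nxtPerm S) ^ ((m:ℤ) * q)) x₀) = x₀ := by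
        rw [← Equiv.Perm.mul_apply, ← zpow_add, show r + (m:ℤ)*q = n by omega]
        exact h2
      rwa [hfixmq] at h3
    have hper : Function.IsPeriodicPt nxt r.toNat x₀ := by
      show nxt^[r.toNat] x₀ = x₀
      have h1 : (nxt : Obj S × Bool → Obj S × Bool) = ⇑(nxtPerm S) := rfl
      rw [h1, ← Equiv.Perm.coe_pow]
      have : ((nxtPerm S) ^ r.toNat : Equiv.Perm _) = (nxtPerm S) ^ r := by
        rw [← zpow_natCast, Int.toNat_of_nonneg hr0]
      rw [this]
      exact hfixr
    have hdvd : m ∣ r.toNat := Function.IsPeriodicPt.minimalPeriod_dvd hper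
    have : r.toNat < m := by omega
    have : r.toNat = 0 := by
      rcases Nat.eq_zero_or_pos r.toNat with h0 | h0
      · exact h0
      · exact absurd (Nat.le_of_dvd h0 hdvd) (by omega)
    have : r = 0 := by omega
    exact Dvd.intro q (by omega)
  · rintro ⟨q, rfl⟩
    unfold tau
    rw [zpow_mul]
    apply perm_fix_zpow
    rw [zpow_natCast]
    have : (⇑((nxtPerm S) ^ (per x₀)) : Obj S × Bool → _) x₀ = nxt^[per x₀] x₀ := by
      rw [Equiv.Perm.coe_pow]; rfl
    rw [this]
    exact Function.isPeriodicPt_minimalPeriod nxt x₀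

theorem tau_eq_tau_iff {a b : ℤ} : tau x₀ a = tau x₀ b ↔ (per x₀ : ℤ) ∣ a - b := by
  rw [← tau_eq_self_iff]
  unfold tau
  constructor
  · intro h
    rw [sub_eq_add_neg, add_comm, zpow_add, Equiv.Perm.mul_apply, h, ← Equiv.Perm.mul_apply,
      ← zpow_add]
    simp
  · intro h
    have : ((nxtPerm S) ^ b) (((nxtPerm S) ^ (a - b)) x₀) = ((nxtPerm S) ^ b) x₀ := by rw [h]
    rwa [← Equiv.Perm.mul_apply, ← zpow_add, add_sub_cancel] at this

end Orbit

/-! ### Objects and vertices along the orbit -/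

section Walk

variable (x₀ : Obj S × Bool)

/-- The object visited at step `n`. -/
def Sg (n : ℤ) : Obj S := (tau x₀ n).1

/-- The forward endpoint at step `n`. -/
def Zz (n : ℤ) : E3 := ep (tau x₀ n).1 (tau x₀ n).2

theorem Sg_succ_ne (n : ℤ) : Sg x₀ (n + 1) ≠ Sg x₀ n := by
  unfold Sg
  rw [tau_add_one]
  exact nxt_fst_ne _

theorem Zz_back (n : ℤ) : ep (tau x₀ (n+1)).1 (!(tau x₀ (n+1)).2) = Zz x₀ n := by
  rw [tau_add_one]
  exact ep_nxt_back _

theorem seg_Sg (n : ℤ) : seg (Sg x₀ (n+1)) = segment ℝ (Zz x₀ n) (Zz x₀ (n+1)) := by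
  show seg ((tau x₀ (n+1)).1) = segment ℝ (Zz x₀ n) (Zz x₀ (n+1))
  rw [seg_eq_ep ((tau x₀ (n+1)).1) ((tau x₀ (n+1)).2), Zz_back x₀ n]
  rfl

theorem Zz_succ_ne (n : ℤ) : Zz x₀ n ≠ Zz x₀ (n+1) := by
  have h := ep_not ((tau x₀ (n+1)).1) ((tau x₀ (n+1)).2)
  rw [Zz_back x₀ n] at h
  exact h

/-- Central parity argument: the orbit never reverses its orientation. -/
theorem no_reverse {j k : ℤ} (h : tau x₀ k = rev (tau x₀ j)) : False := by
  have key : ∀ i : ℤ, tau x₀ (k + i) = rev (tau x₀ (j - i)) := by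
    intro i
    induction i using Int.induction_on with
    | zero => simpa using h
    | succ n ih =>
      have h1 : tau x₀ (j - n) = nxt (tau x₀ (j - n - 1)) := (nxt_tau_sub_one x₀ (j-n)).symm
      have h2 : tau x₀ (k + n + 1) = nxt (tau x₀ (k + n)) := tau_add_one x₀ (k+n)
      calc tau x₀ (k + (n+1))
          = nxt (rev (nxt (tau x₀ (j - n - 1)))) := by
            rw [show k + ((n:ℤ)+1) = k + n + 1 by ring, h2, ih, h1]
        _ = rev (tau x₀ (j - n - 1)) := nxt_rev_nxt _
        _ = rev (tau x₀ (j - (n+1))) := by rw [show j - ((n:ℤ)+1) = j - n - 1 by ring]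
    | pred n ih =>
      have ih' : tau x₀ (k - n) = rev (tau x₀ (j + n)) := by
        have e1 : k + -(n:ℤ) = k - n := by ring
        have e2 : j - -(n:ℤ) = j + n := by ring
        rw [e1, e2] at ih
        exact ih
      have hident : nxt (rev (tau x₀ (j + n + 1))) = rev (tau x₀ (j + n)) := by
        have h0 := nxt_rev_nxt (tau x₀ (j + n))
        rw [← tau_add_one x₀ (j+n)] at h0
        exact h0
      have h3 : nxt (tau x₀ (k - n - 1)) = nxt (rev (tau x₀ (j + n + 1))) := by
        rw [nxt_tau_sub_one x₀ (k - n), hident]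
        exact ih'
      have h4 : tau x₀ (k - n - 1) = rev (tau x₀ (j + n + 1)) := (nxtPerm S).injective h3
      have e3 : k + (-(n:ℤ) - 1) = k - n - 1 := by ring
      have e4 : j - (-(n:ℤ) - 1) = j + n + 1 := by ring
      rw [e3, e4]
      exact h4
  rcases Int.even_or_odd (k - j) with ⟨e, he⟩ | ⟨e, he⟩
  · have hkey := key (-e)
    rw [show k + -e = j - -e by omega] at hkey
    have hb : (tau x₀ (j - -e)).2 = !(tau x₀ (j - -e)).2 := congrArg Prod.snd hkey
    simp at hb
  · have hkey := key (-(e+1))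
    have e1 : k + -(e+1) = (j + e - 1) + 1 := by omega
    have e2 : j - -(e+1) = ((j + e - 1) + 1) + 1 := by omega
    rw [e1, e2] at hkey
    have hs : Sg x₀ ((j+e-1)+1) = Sg x₀ (((j+e-1)+1)+1) := by
      have h5 := congrArg Prod.fst hkey
      simpa [rev, Sg] using h5
    exact Sg_succ_ne x₀ ((j+e-1)+1) hs.symm

theorem Sg_eq_iff {a b : ℤ} : Sg x₀ a = Sg x₀ b ↔ (per x₀ : ℤ) ∣ a - b := by
  constructor
  · intro h
    by_cases ht : tau x₀ a = tau x₀ b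
    · exact (tau_eq_tau_iff x₀).mp ht
    · exfalso
      apply no_reverse x₀ (j := b) (k := a)
      have h2 : (tau x₀ a).2 ≠ (tau x₀ b).2 := by
        intro h2
        apply ht
        exact Prod.ext h h2
      have : (tau x₀ a).2 = !(tau x₀ b).2 := by
        cases hh : (tau x₀ b).2 <;> cases hh' : (tau x₀ a).2 <;> simp_all
      exact Prod.ext h this
  · intro h
    unfold Sg
    rw [(tau_eq_tau_iff x₀).mpr h]

theorem per_ne_one : per x₀ ≠ 1 := by
  intro h
  have h2 : Sg x₀ (0+1) = Sg x₀ 0 :=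
    (Sg_eq_iff x₀ (a := 0+1) (b := 0)).mpr (by rw [h]; norm_num)
  exact Sg_succ_ne x₀ 0 h2

theorem per_ne_two : per x₀ ≠ 2 := by
  intro h
  -- the two distinct objects Sg 0 and Sg 1 would share both distinct endpoints Zz 0 and Zz 1
  have hne : Sg x₀ 1 ≠ Sg x₀ 0 := Sg_succ_ne x₀ 0
  have hZne : Zz x₀ 0 ≠ Zz x₀ 1 := Zz_succ_ne x₀ 0
  -- endpoints of Sg 1 : Zz 0 and Zz 1
  have e11 : IsEnd (Zz x₀ 1) (Sg x₀ 1) := isEnd_ep _ _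
  have e10 : IsEnd (Zz x₀ 0) (Sg x₀ 1) := by
    have := Zz_back x₀ 0
    rw [show (0:ℤ)+1 = 1 by norm_num] at this
    rw [← this]
    exact isEnd_ep _ _
  -- endpoints of Sg 0 = Sg 2 : Zz 1 (back of step 2) and Zz 0
  have htau : tau x₀ 2 = tau x₀ 0 := by
    rw [tau_eq_tau_iff x₀, h]
    norm_num
  have e00 : IsEnd (Zz x₀ 0) (Sg x₀ 0) := isEnd_ep _ _
  have e01 : IsEnd (Zz x₀ 1) (Sg x₀ 0) := by
    have hb := Zz_back x₀ 1
    rw [show (1:ℤ)+1 = 2 by norm_num, htau] at hb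
    rw [← hb]
    exact isEnd_ep _ _
  -- geometric contradiction
  rcases end_on_edge e10 with ⟨a, b, hab, ha1, hb1, hz0⟩
  rcases end_on_edge e11 with ⟨c, d, hcd, hc1, hd1, hz1⟩
  obtain ⟨j, k, l, m, hji, hki, hli, hmi, hjk, hlm, hnejk, h1, h2⟩ := joins (Sg x₀ 0)
  have hf : (Sg x₀ 0).1 ≠ (Sg x₀ 1).1 := by
    intro hf
    exact hne (same_face_eq hf (mem_seg_of_isEnd e00) (mem_seg_of_isEnd e10)).symm
  -- identify the edges of the endpoints of Sg 0 with {a,b}, {c,d}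
  have hedge : ∀ z : E3, IsEnd z (Sg x₀ 0) → ∀ a' b' : Fin 4, a' ≠ b' →
      z ∈ openSegment ℝ (S.v a') (S.v b') → (Sg x₀ 0).1 ∉ ({a', b'} : Finset (Fin 4)) := by
    intro z hz a' b' hab' hzo
    rcases end_on_edge hz with ⟨u, w, huw, hu, hw, hzuw⟩
    have : ({u, w} : Finset (Fin 4)) = {a', b'} :=
      edge_unique S.hv huw hab' hzuw (openSegment_subset_segment ℝ _ _ hzo)
    rw [← this]
    intro hmem
    rcases Finset.mem_insert.mp hmem with h' | h'
    · exact hu h'.symm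
    · rw [Finset.mem_singleton] at h'
      exact hw h'.symm
  have hnotab := hedge _ e00 a b hab hz0
  have hnotcd := hedge _ e01 c d hcd hz1
  -- {a,b} and {c,d} are the two distinct edges of the face of Sg 1
  have habcd : ({a,b} : Finset (Fin 4)) ≠ {c,d} := by
    intro hsame
    -- then Zz 0 and Zz 1 both endpoints of Sg 1 on "distinct" edges... 
    -- use join data of Sg 1 to derive a contradiction
    obtain ⟨j', k', l', m', hji', hki', hli', hmi', hjk', hlm', hne', h1', h2'⟩ := joins (Sg x₀ 1)
    -- Zz 0, Zz 1 are the two endpoints, on edges {j',k'} and {l',m'} in some order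
    have hZ0 : Zz x₀ 0 = epA (Sg x₀ 1) ∨ Zz x₀ 0 = epB (Sg x₀ 1) := e10
    have hZ1 : Zz x₀ 1 = epA (Sg x₀ 1) ∨ Zz x₀ 1 = epB (Sg x₀ 1) := e11
    rcases hZ0 with hZ0 | hZ0 <;> rcases hZ1 with hZ1 | hZ1
    · exact hZne (hZ0.trans hZ1.symm)
    · -- Zz0 on {j',k'}, Zz1 on {l',m'}
      apply hne'
      have e1 : ({a,b} : Finset (Fin 4)) = {j',k'} :=
        edge_unique S.hv hab hjk' hz0 (openSegment_subset_segment ℝ _ _ (hZ0 ▸ h1'))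
      have e2 : ({c,d} : Finset (Fin 4)) = {l',m'} :=
        edge_unique S.hv hcd hlm' hz1 (openSegment_subset_segment ℝ _ _ (hZ1 ▸ h2'))
      rw [← e1, ← e2, hsame]
    · apply hne'
      have e1 : ({c,d} : Finset (Fin 4)) = {j',k'} :=
        edge_unique S.hv hcd hjk' hz1 (openSegment_subset_segment ℝ _ _ (hZ1 ▸ h1'))
      have e2 : ({a,b} : Finset (Fin 4)) = {l',m'} :=
        edge_unique S.hv hab hlm' hz0 (openSegment_subset_segment ℝ _ _ (hZ0 ▸ h2'))
      rw [← e1, ← e2, hsame]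
    · exact hZne (hZ0.trans hZ1.symm)
  -- a, b, c, d are all different from (Sg 1).1
  have hav : a ≠ (Sg x₀ 1).1 ∧ b ≠ (Sg x₀ 1).1 := by
    have := endpoint_not_in_face (i := (Sg x₀ 1).1) S.hv hab hz0
    constructor
    · intro hh; exact this (Or.inl hh.symm) (seg_subset_face _ (mem_seg_of_isEnd e10))
    · intro hh; exact this (Or.inr hh.symm) (seg_subset_face _ (mem_seg_of_isEnd e10))
  have hcv : c ≠ (Sg x₀ 1).1 ∧ d ≠ (Sg x₀ 1).1 := by
    have := endpoint_not_in_face (i := (Sg x₀ 1).1) S.hv hcd hz1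
    constructor
    · intro hh; exact this (Or.inl hh.symm) (seg_subset_face _ (mem_seg_of_isEnd e11))
    · intro hh; exact this (Or.inr hh.symm) (seg_subset_face _ (mem_seg_of_isEnd e11))
  have hunion : ({a,b} ∪ {c,d} : Finset (Fin 4)) = {(Sg x₀ 1).1}ᶜ :=
    pair_compl_union _ a b c d ⟨hab, hcd, hav.1, hav.2, hcv.1, hcv.2, habcd⟩
  have hmem : (Sg x₀ 0).1 ∈ ({(Sg x₀ 1).1}ᶜ : Finset (Fin 4)) := by
    simp only [Finset.mem_compl, Finset.mem_singleton]
    exact hf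
  rw [← hunion, Finset.mem_union] at hmem
  rcases hmem with hmem | hmem
  · exact hnotab hmem
  · exact hnotcd hmem

theorem Zz_eq_iff {a b : ℤ} : Zz x₀ a = Zz x₀ b ↔ (per x₀ : ℤ) ∣ a - b := by
  constructor
  · intro h
    -- objects having Zz a as an endpoint are exactly Sg a and Sg (a+1)
    have hA : ∀ n : ℤ, ∀ o : Obj S, IsEnd (Zz x₀ n) o → o = Sg x₀ n ∨ o = Sg x₀ (n+1) := by
      intro n o ho
      by_cases h0 : o = Sg x₀ n
      · exact Or.inl h0
      · right
        have : o = partner (tau x₀ n).1 (tau x₀ n).2 := partner_uniq h0 ho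
        rw [this]
        unfold Sg
        rw [tau_add_one]
        rfl
    have hE1 : IsEnd (Zz x₀ b) (Sg x₀ b) := isEnd_ep _ _
    have hE2 : IsEnd (Zz x₀ b) (Sg x₀ (b+1)) := by
      rw [← Zz_back x₀ b]
      exact isEnd_ep _ _
    rw [← h] at hE1 hE2
    rcases hA a _ hE1 with h1 | h1
    · have hd := (Sg_eq_iff x₀).mp h1
      rw [show a - b = -(b - a) by ring]
      exact dvd_neg.mpr hd
    · -- Sg b = Sg (a+1)
      rcases hA a _ hE2 with h2 | h2
      · -- Sg (b+1) = Sg a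
        have d1 : (per x₀ : ℤ) ∣ b - (a+1) := (Sg_eq_iff x₀).mp h1
        have d2 : (per x₀ : ℤ) ∣ (b+1) - a := (Sg_eq_iff x₀).mp h2
        have hsub : (per x₀ : ℤ) ∣ 2 := by
          have hs2 := dvd_sub d2 d1
          rw [show ((b:ℤ)+1) - a - (b - (a+1)) = 2 by ring] at hs2
          exact hs2
        have hper2 : per x₀ ≤ 2 := by
          have := Int.le_of_dvd (by norm_num) hsub
          omega
        interval_cases hc : (per x₀)
        · exact absurd hc (per_pos x₀).ne'
        · exact absurd hc (per_ne_one x₀)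
        · exact absurd hc (per_ne_two x₀)
      · -- Sg (b+1) = Sg (a+1)  and Sg b = Sg (a+1): so Sg (b+1) = Sg b, contra
        exfalso
        exact Sg_succ_ne x₀ b (h2.trans h1.symm)
  · intro h
    unfold Zz
    rw [(tau_eq_tau_iff x₀).mpr h]

end Walk

/-! ### Connectivity: the orbit covers everything -/

theorem isClosed_segment' (x y : E3) : IsClosed (segment ℝ x y) := by
  rw [segment_eq_image']
  exact (isCompact_Icc.image (by continuity)).isClosed

theorem neighbor (x₀ : Obj S × Bool) {n : ℤ} {o' : Obj S} (hne : o' ≠ Sg x₀ n) {z : E3}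
    (hz : IsEnd z (Sg x₀ n)) (hz' : IsEnd z o') :
    o' = Sg x₀ (n+1) ∨ o' = Sg x₀ (n-1) := by
  set b := slotOf (Sg x₀ n) z with hbdef
  have hb : ep (Sg x₀ n) b = z := ep_slotOf hz
  have ho' : o' = partner (Sg x₀ n) b := partner_uniq hne (hb ▸ hz')
  by_cases hcase : b = (tau x₀ n).2
  · left
    rw [ho', hcase]
    show partner ((tau x₀ n).1) ((tau x₀ n).2) = Sg x₀ (n+1)
    unfold Sg
    rw [tau_add_one]
    rfl
  · right
    have hcase' : b = !(tau x₀ n).2 := by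
      cases hbb : (tau x₀ n).2 <;> cases hbb' : b <;> simp_all
    rw [ho', hcase']
    symm
    apply partner_uniq
    · intro hh
      have := Sg_succ_ne x₀ (n-1)
      rw [show n - 1 + 1 = n by ring] at this
      exact this (by rw [← hh])
    · have hzb := Zz_back x₀ (n-1)
      rw [show n - 1 + 1 = n by ring] at hzb
      show IsEnd (ep ((tau x₀ n).1) (!(tau x₀ n).2)) (Sg x₀ (n-1))
      rw [hzb]
      exact isEnd_ep _ _

theorem covered (x₀ : Obj S × Bool) (hconn : IsPreconnected S.P) (o : Obj S) :
    ∃ n : ℤ, o = Sg x₀ n := by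
  classical
  set C : Set (Obj S) := {o | ∃ n : ℤ, o = Sg x₀ n} with hC
  by_contra hno
  have hoC : o ∉ C := hno
  set A : Set E3 := ⋃ o' ∈ C, seg o' with hA
  set B : Set E3 := ⋃ o' ∈ Cᶜ, seg o' with hB
  have hPeq : S.P = A ∪ B := by
    rw [hA, hB, ← Set.biUnion_union, Set.union_compl_self, Set.biUnion_univ]
    apply Set.Subset.antisymm
    · intro x hx
      have hx2 : x ∈ Tet S.v := S.hsub hx
      rw [Tet, Set.mem_iUnion] at hx2
      obtain ⟨i, hi⟩ := hx2
      have : x ∈ ⋃ p ∈ S.L i, segment ℝ p.1 p.2 := by rw [← S.hface i]; exact ⟨hx, hi⟩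
      rw [Set.mem_iUnion₂] at this
      obtain ⟨p, hp, hxp⟩ := this
      rw [Set.mem_iUnion]
      exact ⟨⟨i, p, hp⟩, hxp⟩
    · intro x hx
      rw [Set.mem_iUnion] at hx
      obtain ⟨o', hxo⟩ := hx
      exact seg_subset_P _ hxo
  have hdisjAB : A ∩ B = ∅ := by
    rw [Set.eq_empty_iff_forall_notMem]
    rintro x ⟨hxA, hxB⟩
    rw [hA, Set.mem_iUnion₂] at hxA
    rw [hB, Set.mem_iUnion₂] at hxB
    obtain ⟨o1, ho1, hxo1⟩ := hxA
    obtain ⟨o2, ho2, hxo2⟩ := hxB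
    have hne12 : o1 ≠ o2 := by rintro rfl; exact ho2 ho1
    obtain ⟨n, rfl⟩ := ho1
    have hends := shared_isEnd hne12 hxo1 hxo2
    have : o2 = Sg x₀ (n+1) ∨ o2 = Sg x₀ (n-1) :=
      neighbor x₀ (Ne.symm hne12) hends.1 hends.2
    rcases this with h2 | h2
    · exact ho2 ⟨n+1, h2⟩
    · exact ho2 ⟨n-1, h2⟩
  have hclA : IsClosed A :=
    (Set.toFinite C).isClosed_biUnion (fun o' _ => isClosed_segment' _ _)
  have hclB : IsClosed B :=
    (Set.toFinite Cᶜ).isClosed_biUnion (fun o' _ => isClosed_segment' _ _)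
  have hAne : (S.P ∩ Bᶜ).Nonempty := by
    refine ⟨epA (Sg x₀ 0), ?_, ?_⟩
    · exact seg_subset_P _ (epA_mem _)
    · intro hmem
      have : epA (Sg x₀ 0) ∈ A ∩ B :=
        ⟨Set.mem_biUnion (⟨0, rfl⟩ : Sg x₀ 0 ∈ C) (epA_mem _), hmem⟩
      rw [hdisjAB] at this
      exact this
  have hBne : (S.P ∩ Aᶜ).Nonempty := by
    refine ⟨epA o, ?_, ?_⟩
    · exact seg_subset_P _ (epA_mem _)
    · intro hmem
      have : epA o ∈ A ∩ B := ⟨hmem, Set.mem_biUnion hoC (epA_mem _)⟩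
      rw [hdisjAB] at this
      exact this
  have := hconn Bᶜ Aᶜ hclB.isOpen_compl hclA.isOpen_compl
    (by
      intro x hx
      rw [hPeq] at hx
      rcases hx with hx | hx
      · exact Or.inl (fun hxB => (Set.eq_empty_iff_forall_notMem.mp hdisjAB x) ⟨hx, hxB⟩)
      · exact Or.inr (fun hxA => (Set.eq_empty_iff_forall_notMem.mp hdisjAB x) ⟨hxA, hx⟩))
    hAne hBne
  obtain ⟨x, hxP, hxB, hxA⟩ := this
  rw [hPeq] at hxP
  rcases hxP with h | h
  · exact hxA h
  · exact hxB h

/-! ### Topological gluing helpers -/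

theorem continuousOn_union_closed {α : Type*} [TopologicalSpace α] {f : ℝ → α} {s t : Set ℝ}
    (hs : IsClosed s) (ht : IsClosed t) (hfs : ContinuousOn f s) (hft : ContinuousOn f t) :
    ContinuousOn f (s ∪ t) := by
  intro x hx
  rcases hx with hxs | hxt
  · by_cases hxt : x ∈ t
    · exact ((hfs x hxs).union ((hft x hxt)))
    · apply ContinuousWithinAt.union (hfs x hxs)
      exact continuousWithinAt_of_notMem_closure (by rwa [ht.closure_eq])
  · by_cases hxs : x ∈ s
    · exact ((hfs x hxs).union ((hft x hxt)))
    · apply ContinuousWithinAt.union _ (hft x hxt)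
      exact continuousWithinAt_of_notMem_closure (by rwa [hs.closure_eq])

/-! ### The parametrization -/

theorem int_dvd_small {m d : ℤ} (hdvd : m ∣ d) (h1 : -m < d) (h2 : d < m) : d = 0 := by
  obtain ⟨q, rfl⟩ := hdvd
  rcases lt_trichotomy q 0 with h | h | h
  · have : m * q ≤ m * (-1) := by
      apply mul_le_mul_of_nonneg_left (by omega) (by nlinarith)
    linarith
  · simp [h]
  · have : m * 1 ≤ m * q := by
      apply mul_le_mul_of_nonneg_left (by omega) (by nlinarith)
    linarith

theorem opn_eq_ep (o : Obj S) (b : Bool) : opn o = openSegment ℝ (ep o (!b)) (ep o b) := by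
  cases b
  · exact openSegment_symm ℝ _ _
  · rfl

theorem opn_Sg (x₀ : Obj S × Bool) (n : ℤ) :
    opn (Sg x₀ (n+1)) = openSegment ℝ (Zz x₀ n) (Zz x₀ (n+1)) := by
  show opn ((tau x₀ (n+1)).1) = _
  rw [opn_eq_ep ((tau x₀ (n+1)).1) ((tau x₀ (n+1)).2), Zz_back x₀ n]
  rfl

section Param

variable (x₀ : Obj S × Bool)

/-- The piecewise-linear parametrization of the track. -/
def F (t : ℝ) : E3 :=
  Zz x₀ ⌊t⌋ + Int.fract t • (Zz x₀ (⌊t⌋ + 1) - Zz x₀ ⌊t⌋)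

theorem F_int (n : ℤ) : F x₀ (n : ℝ) = Zz x₀ n := by
  unfold F
  rw [Int.floor_intCast, Int.fract_intCast, zero_smul, add_zero]

theorem F_on_Icc {n : ℤ} {t : ℝ} (ht : t ∈ Icc (n : ℝ) ((n:ℝ) + 1)) :
    F x₀ t = Zz x₀ n + (t - n) • (Zz x₀ (n + 1) - Zz x₀ n) := by
  rcases eq_or_lt_of_le ht.2 with heq | hlt
  · rw [show t = ((n+1 : ℤ) : ℝ) by push_cast; linarith, F_int]
    push_cast
    rw [show (n:ℝ) + 1 - n = 1 by ring, one_smul]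
    abel
  · have hfl : ⌊t⌋ = n := by
      rw [Int.floor_eq_iff]
      · exact ⟨ht.1, by push_cast; linarith⟩
    unfold F
    rw [hfl, Int.fract, hfl]

theorem F_mem_segment {n : ℤ} {t : ℝ} (ht : t ∈ Icc (n : ℝ) ((n:ℝ) + 1)) :
    F x₀ t ∈ segment ℝ (Zz x₀ n) (Zz x₀ (n + 1)) := by
  rw [segment_eq_image', F_on_Icc x₀ ht]
  exact ⟨t - n, ⟨by linarith [ht.1], by linarith [ht.2]⟩, rfl⟩

theorem F_mem_openSegment {n : ℤ} {t : ℝ} (ht : t ∈ Ioo (n : ℝ) ((n:ℝ) + 1)) :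
    F x₀ t ∈ openSegment ℝ (Zz x₀ n) (Zz x₀ (n + 1)) := by
  rw [openSegment_eq_image', F_on_Icc x₀ ⟨ht.1.le, ht.2.le⟩]
  exact ⟨t - n, ⟨by linarith [ht.1], by linarith [ht.2]⟩, rfl⟩

theorem F_continuousOn_Icc (n : ℤ) : ContinuousOn (F x₀) (Icc (n:ℝ) ((n:ℝ)+1)) := by
  apply ContinuousOn.congr
    (f := fun t => Zz x₀ n + (t - (n:ℝ)) • (Zz x₀ (n + 1) - Zz x₀ n))
  · apply Continuous.continuousOn
    exact continuous_const.add (((continuous_id.sub continuous_const).smul continuous_const))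
  · intro t ht
    exact F_on_Icc x₀ ht

theorem F_continuousOn (k : ℕ) : ContinuousOn (F x₀) (Icc (0:ℝ) (k:ℝ)) := by
  induction k with
  | zero => simpa using continuousOn_singleton (F x₀) 0
  | succ k ih =>
    have hsplit : Icc (0:ℝ) ((k:ℝ)+1) = Icc (0:ℝ) (k:ℝ) ∪ Icc (k:ℝ) ((k:ℝ)+1) :=
      (Icc_union_Icc_eq_Icc (by positivity) (by linarith)).symm
    rw [show ((k+1 : ℕ):ℝ) = (k:ℝ)+1 by push_cast; ring, hsplit]
    apply continuousOn_union_closed isClosed_Icc isClosed_Icc ih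
    have := F_continuousOn_Icc x₀ (k : ℤ)
    rwa [show (((k:ℤ)):ℝ) = (k:ℝ) by push_cast; ring] at this

end Param

/-! ### The master construction -/

theorem obj_nonempty (hne : S.P.Nonempty) : Nonempty (Obj S) := by
  obtain ⟨x, hx⟩ := hne
  have hx2 : x ∈ Tet S.v := S.hsub hx
  rw [Tet, Set.mem_iUnion] at hx2
  obtain ⟨i, hi⟩ := hx2
  have : x ∈ ⋃ p ∈ S.L i, segment ℝ p.1 p.2 := by rw [← S.hface i]; exact ⟨hx, hi⟩
  rw [Set.mem_iUnion₂] at this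
  obtain ⟨p, hp, _⟩ := this
  exact ⟨⟨i, p, hp⟩⟩

/-- An endpoint of an object is never strictly inside another object's segment. -/
theorem end_not_in_opn {z : E3} {o : Obj S} (hz : IsEnd z o) (o' : Obj S) : z ∉ opn o' := by
  intro hmem
  obtain ⟨a, b, hab, _, _, hedge⟩ := end_on_edge hz
  exact opn_avoids_edge hmem hab (openSegment_subset_segment ℝ _ _ hedge)

/-- The unit circle in `ℂ` is homeomorphic to the unit sphere in `EuclideanSpace ℝ (Fin 2)`. -/
def circleHomeoSphere : Circle ≃ₜ Metric.sphere (0 : EuclideanSpace ℝ (Fin 2)) 1 := by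
  have e : ℂ ≃ₗᵢ[ℝ] EuclideanSpace ℝ (Fin 2) := Complex.orthonormalBasisOneI.repr
  refine Homeomorph.trans ?_ (Homeomorph.setCongr (s := e '' (Metric.sphere 0 1)) ?_)
  · exact (e.toHomeomorph.image (Metric.sphere (0:ℂ) 1))
  · ext x
    constructor
    · rintro ⟨y, hy, rfl⟩
      simp only [Metric.mem_sphere, dist_zero_right] at *
      rw [e.norm_map]
      exact hy
    · intro hx
      refine ⟨e.symm x, ?_, by simp⟩
      simp only [Metric.mem_sphere, dist_zero_right] at *
      rw [e.symm.norm_map]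
      exact hx

theorem main (S : Setup) (hne : S.P.Nonempty) (hconn : IsPreconnected S.P) :
    Nonempty (S.P ≃ₜ Metric.sphere (0 : EuclideanSpace ℝ (Fin 2)) 1) := by
  classical
  obtain ⟨o₀⟩ := obj_nonempty hne
  set x₀ : Obj S × Bool := (o₀, true) with hx₀
  set m : ℕ := per x₀ with hm
  have hmpos : 0 < m := per_pos x₀
  have hmR : (0:ℝ) < (m:ℝ) := by exact_mod_cast hmpos
  haveI : Fact (0 < (m:ℝ)) := ⟨hmR⟩
  -- values of F lie in P
  have floor_mem : ∀ t : ℝ, t ∈ Ico (0:ℝ) (m:ℝ) → t ∈ Icc ((⌊t⌋:ℝ)) ((⌊t⌋:ℝ)+1) :=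
    fun t _ => ⟨Int.floor_le t, (Int.lt_floor_add_one t).le⟩
  have hFP : ∀ t ∈ Ico (0:ℝ) (m:ℝ), F x₀ t ∈ S.P := by
    intro t ht
    have := F_mem_segment x₀ (floor_mem t ht)
    rw [← seg_Sg x₀ ⌊t⌋] at this
    exact seg_subset_P _ this
  -- F is periodic at the endpoints
  have hF0m : F x₀ 0 = F x₀ (m:ℝ) := by
    have h0 : F x₀ ((0:ℤ):ℝ) = Zz x₀ 0 := F_int x₀ 0
    have hmm : F x₀ (((m:ℤ)):ℝ) = Zz x₀ (m:ℤ) := F_int x₀ (m:ℤ)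
    have hper : Zz x₀ (m:ℤ) = Zz x₀ 0 := by
      rw [Zz_eq_iff]
      simp
      exact dvd_refl _
    rw [show ((0:ℤ):ℝ) = (0:ℝ) by norm_num] at h0
    rw [show (((m:ℤ)):ℝ) = ((m:ℕ):ℝ) by push_cast; ring] at hmm
    rw [h0, hmm, hper]
  -- points with nonzero fractional part lie strictly inside a segment
  have hinterior : ∀ t : ℝ, ((⌊t⌋:ℝ)) < t → F x₀ t ∈ opn (Sg x₀ (⌊t⌋+1)) := by
    intro t hlt
    rw [opn_Sg]
    exact F_mem_openSegment x₀ ⟨hlt, Int.lt_floor_add_one t⟩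
  -- injectivity of F on Ico 0 m
  have hFinj : ∀ t1 ∈ Ico (0:ℝ) (m:ℝ), ∀ t2 ∈ Ico (0:ℝ) (m:ℝ), F x₀ t1 = F x₀ t2 → t1 = t2 := by
    intro t1 ht1 t2 ht2 heq
    have hb1 : 0 ≤ ⌊t1⌋ ∧ ⌊t1⌋ < (m:ℤ) := by
      constructor
      · exact Int.floor_nonneg.mpr ht1.1
      · exact_mod_cast lt_of_le_of_lt (Int.floor_le t1) ht1.2
    have hb2 : 0 ≤ ⌊t2⌋ ∧ ⌊t2⌋ < (m:ℤ) := by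
      constructor
      · exact Int.floor_nonneg.mpr ht2.1
      · exact_mod_cast lt_of_le_of_lt (Int.floor_le t2) ht2.2
    have hIcc1 := floor_mem t1 ht1
    have hIcc2 := floor_mem t2 ht2
    have hvert : ∀ a b : ℤ, 0 ≤ a → a < m → 0 ≤ b → b < m → Zz x₀ a = Zz x₀ b → a = b := by
      intro a b ha ham hb hbm hz
      have hdvd := (Zz_eq_iff x₀).mp hz
      have := int_dvd_small hdvd (by omega) (by omega)
      omega
    rcases eq_or_lt_of_le hIcc1.1 with h1 | h1 <;> rcases eq_or_lt_of_le hIcc2.1 with h2 | h2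
    · -- both vertices
      rw [← h1, ← h2, F_int, F_int] at heq
      have := hvert _ _ hb1.1 hb1.2 hb2.1 hb2.2 heq
      rw [← h1, ← h2, this]
    · -- t1 vertex, t2 interior : impossible
      exfalso
      rw [← h1, F_int] at heq
      have hop := hinterior t2 h2
      rw [← heq] at hop
      exact end_not_in_opn (isEnd_ep _ _) _ hop
    · -- t2 vertex, t1 interior : impossible
      exfalso
      rw [← h2, F_int] at heq
      have hop := hinterior t1 h1
      rw [heq] at hop
      exact end_not_in_opn (isEnd_ep _ _) _ hop
    · -- both interior
      have hop1 := hinterior t1 h1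
      have hop2 := hinterior t2 h2
      have hoo : Sg x₀ (⌊t1⌋+1) = Sg x₀ (⌊t2⌋+1) := by
        by_contra hne'
        have hseg1 : F x₀ t1 ∈ seg (Sg x₀ (⌊t1⌋+1)) := by
          rw [seg_Sg]
          exact F_mem_segment x₀ hIcc1
        have hseg2 : F x₀ t1 ∈ seg (Sg x₀ (⌊t2⌋+1)) := by
          rw [heq, seg_Sg]
          exact F_mem_segment x₀ hIcc2
        have hends := shared_isEnd hne' hseg1 hseg2
        exact end_not_in_opn hends.1 _ hop1
      have hnn : ⌊t1⌋ = ⌊t2⌋ := by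
        have hdvd := (Sg_eq_iff x₀).mp hoo
        have h5 : (⌊t1⌋ : ℤ) + 1 - (⌊t2⌋ + 1) = ⌊t1⌋ - ⌊t2⌋ := by ring
        rw [h5] at hdvd
        have := int_dvd_small hdvd (by omega) (by omega)
        omega
      rw [F_on_Icc x₀ hIcc1, F_on_Icc x₀ hIcc2, hnn] at heq
      have hzz : Zz x₀ (⌊t2⌋+1) - Zz x₀ ⌊t2⌋ ≠ 0 := by
        intro hh
        exact Zz_succ_ne x₀ ⌊t2⌋ (by rwa [sub_eq_zero, eq_comm] at hh)
      have h6 : (t1 - (⌊t2⌋:ℝ)) = (t2 - (⌊t2⌋:ℝ)) := by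
        have h3 := sub_eq_zero.mpr heq
        rw [add_sub_add_left_eq_sub, ← sub_smul] at h3
        rcases smul_eq_zero.mp h3 with h4 | h4
        · linarith [sub_eq_zero.mp h4]
        · exact absurd h4 hzz
      linarith
  -- surjectivity of F from Ico 0 m onto P
  have hFsurj : ∀ y ∈ S.P, ∃ t ∈ Ico (0:ℝ) (m:ℝ), F x₀ t = y := by
    intro y hy
    have hy2 : y ∈ Tet S.v := S.hsub hy
    rw [Tet, Set.mem_iUnion] at hy2
    obtain ⟨i, hi⟩ := hy2
    have : y ∈ ⋃ p ∈ S.L i, segment ℝ p.1 p.2 := by rw [← S.hface i]; exact ⟨hy, hi⟩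
    rw [Set.mem_iUnion₂] at this
    obtain ⟨p, hp, hyp⟩ := this
    obtain ⟨k, hk⟩ := covered x₀ hconn ⟨i, p, hp⟩
    set n : ℤ := (k - 1) % (m:ℤ) with hn
    have hmZ : (0:ℤ) < (m:ℤ) := by exact_mod_cast hmpos
    have hn0 : 0 ≤ n := Int.emod_nonneg _ (by omega)
    have hnm : n < (m:ℤ) := Int.emod_lt_of_pos _ hmZ
    have hSg : Sg x₀ (n+1) = Sg x₀ k := by
      rw [Sg_eq_iff]
      have : ((m:ℤ)) ∣ (k-1) - n := Int.dvd_self_sub_of_emod_eq rfl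
      obtain ⟨q, hq⟩ := this
      exact ⟨-q, by rw [mul_neg, ← hq]; ring⟩
    have hyseg : y ∈ segment ℝ (Zz x₀ n) (Zz x₀ (n+1)) := by
      rw [← seg_Sg x₀ n, hSg, ← hk]
      exact hyp
    rw [segment_eq_image'] at hyseg
    obtain ⟨θ, hθ, hyθ⟩ := hyseg
    rcases lt_or_eq_of_le hθ.2 with hθ1 | hθ1
    · have hn0R : (0:ℝ) ≤ (n:ℝ) := by exact_mod_cast hn0
      refine ⟨(n:ℝ) + θ, ⟨by linarith [hθ.1], ?_⟩, ?_⟩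
      · have : (n:ℝ) + θ < n + 1 := by linarith
        have h2 : ((n:ℝ)) + 1 ≤ (m:ℝ) := by exact_mod_cast hnm
        linarith
      · rw [F_on_Icc x₀ ⟨by linarith [hθ.1], by linarith⟩]
        rw [← hyθ]
        congr 1
        rw [add_sub_cancel_left]
    · -- θ = 1 : y = Zz (n+1)
      have hyZ : y = Zz x₀ (n+1) := by
        rw [← hyθ, hθ1]
        module
      by_cases hcase : n + 1 < (m:ℤ)
      · refine ⟨((n+1 : ℤ):ℝ), ⟨by positivity, by exact_mod_cast hcase⟩, ?_⟩
        rw [F_int, hyZ]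
      · have hnm1 : n + 1 = (m:ℤ) := by omega
        refine ⟨0, ⟨le_refl _, hmR⟩, ?_⟩
        rw [show (0:ℝ) = ((0:ℤ):ℝ) by norm_num, F_int, hyZ]
        rw [Zz_eq_iff]
        exact ⟨-1, by omega⟩
  -- the lifted map on the circle
  set G : AddCircle (m:ℝ) → E3 := AddCircle.liftIco (m:ℝ) 0 (F x₀) with hG
  have hGcont : Continuous G := by
    apply AddCircle.liftIco_zero_continuous hF0m
    have := F_continuousOn x₀ m
    exact this
  have hrep : ∀ z : AddCircle (m:ℝ), ∃ x ∈ Ico (0:ℝ) (m:ℝ), (x : AddCircle (m:ℝ)) = z := by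
    intro z
    have himg := AddCircle.coe_image_Ico_eq (p := (m:ℝ)) (a := (0:ℝ))
    have hz : z ∈ ((↑) : ℝ → AddCircle (m:ℝ)) '' Ico 0 (0 + (m:ℝ)) := by
      rw [himg]; trivial
    obtain ⟨x, hx, hxz⟩ := hz
    rw [zero_add] at hx
    exact ⟨x, hx, hxz⟩
  have hGval : ∀ x ∈ Ico (0:ℝ) (m:ℝ), G ((x : ℝ) : AddCircle (m:ℝ)) = F x₀ x := by
    intro x hx
    apply AddCircle.liftIco_zero_coe_apply
    exact hx
  have hGP : ∀ z : AddCircle (m:ℝ), G z ∈ S.P := by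
    intro z
    obtain ⟨x, hx, rfl⟩ := hrep z
    rw [hGval x hx]
    exact hFP x hx
  -- the bijection
  set e : AddCircle (m:ℝ) → S.P := fun z => ⟨G z, hGP z⟩ with he
  have hbij : Function.Bijective e := by
    constructor
    · intro z1 z2 h12
      obtain ⟨x1, hx1, rfl⟩ := hrep z1
      obtain ⟨x2, hx2, rfl⟩ := hrep z2
      have : G ((x1 : ℝ) : AddCircle (m:ℝ)) = G ((x2 : ℝ) : AddCircle (m:ℝ)) :=
        congrArg Subtype.val h12
      rw [hGval x1 hx1, hGval x2 hx2] at this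
      rw [hFinj x1 hx1 x2 hx2 this]
    · rintro ⟨y, hy⟩
      obtain ⟨t, ht, hFt⟩ := hFsurj y hy
      refine ⟨((t : ℝ) : AddCircle (m:ℝ)), ?_⟩
      apply Subtype.ext
      show G _ = y
      rw [hGval t ht, hFt]
  have hcont : Continuous e := hGcont.subtype_mk _
  have hhomeo : AddCircle (m:ℝ) ≃ₜ S.P :=
    Continuous.homeoOfEquivCompactToT2 (f := Equiv.ofBijective e hbij) hcont
  exact ⟨hhomeo.symm.trans ((AddCircle.homeomorphCircle hmR.ne').trans circleHomeoSphere)⟩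


end TrackAux


/-- Every track in the boundary tetrahedron `T`, with the subspace topology from `ℝ³`,
is homeomorphic to the circle `S¹`, the unit sphere in `EuclideanSpace ℝ (Fin 2)`. -/
theorem track_homeomorphic_circle
    (v : Fin 4 → E3) (hv : AffineIndependent ℝ v)
    (P : Set E3) (hP : IsTrack v P) :
    Nonempty (P ≃ₜ Metric.sphere (0 : EuclideanSpace ℝ (Fin 2)) 1) := by
  obtain ⟨⟨hsub, hfaces, _hedges⟩, hne, hconn⟩ := hP
  choose L hLface hLjoin hLdisj using hfaces
  exact TrackAux.main ⟨v, hv, P, L, hLface, hLjoin, hLdisj, hsub⟩ hne hconn
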